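/- arXiv:1407.5398 — 2 statements merged into one kernel-verified Lean document; each statement's English description precedes it below -/
import Mathlib

section
/- Let Σ : ℝ → [𝓗] be a distribution function (left-continuous, non-decreasing, Σ(0)=0, values in bounded self-adjoint operators on a finite-dimensional Hilbert space 𝓗), with associated scalar measure σ and density Ψ ≥ 0 so that Σ(β) − Σ(α) = ∫_{[α,β)} Ψ dσ. Then the multiplication operator Λ_Σ in L²(Σ;𝓗), defined on classes f̃ with s ↦ s f(s) in L²(Σ;𝓗) by Λ_Σ f̃ = π_Σ(s f(s)), is self-adjoint. -/
open MeasureTheory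

noncomputable section

private lemma aux_inner {E : Type*} [NormedAddCommGroup E] [InnerProductSpace ℂ E]
    (T : E →L[ℂ] E) (a b : ℝ) (x y : E) :
    (inner ℂ (a • x) (T (b • y)) : ℂ) = ((a * b : ℝ) : ℂ) * inner ℂ x (T y) := by
  rw [T.map_smul_of_tower, RCLike.real_smul_eq_coe_smul (K := ℂ) a,
    RCLike.real_smul_eq_coe_smul (K := ℂ) b, inner_smul_left, inner_smul_right]
  simp [Complex.conj_ofReal]; ring

private lemma aux_inner_r {E : Type*} [NormedAddCommGroup E] [InnerProductSpace ℂ E]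
    (T : E →L[ℂ] E) (b : ℝ) (x y : E) :
    (inner ℂ x (T (b • y)) : ℂ) = (b : ℂ) * inner ℂ x (T y) := by
  have := aux_inner T 1 b x y; simpa using this

private lemma aux_real_mul {z : ℂ} (hz : z.im = 0) (r : ℝ) :
    (r : ℂ) * z = ((r * z.re : ℝ) : ℂ) := by
  apply Complex.ext <;> simp [Complex.mul_re, Complex.mul_im, hz]

/-- The adjoint relation `A* = {(k,k') : ⟪k',h⟫ = ⟪k,h'⟫ for all (h,h') ∈ A}`. -/
def relAdjSet {L : Type*} [NormedAddCommGroup L] [InnerProductSpace ℂ L]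
    (A : Set (L × L)) : Set (L × L) :=
  {p | ∀ q ∈ A, (@inner ℂ _ _ p.2 q.1) = @inner ℂ _ _ p.1 q.2}

/-- The multiplication operator `Λ_Σ` in `L²(Σ;𝓗)`, where `dΣ = Ψ dσ`: here `L` plays the
role of `L²(Σ;𝓗)`, `π` the quotient map, and `SqInt` the class `𝓛²(Σ;𝓗)` of
square-integrable functions. `Λ_Σ` is self-adjoint. -/
theorem stmt4 {𝓗 L : Type*} [NormedAddCommGroup 𝓗] [InnerProductSpace ℂ 𝓗]
    [FiniteDimensional ℂ 𝓗] [MeasurableSpace 𝓗] [BorelSpace 𝓗] [NormedAddCommGroup L] [InnerProductSpace ℂ L] [CompleteSpace L]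
    (σ : Measure ℝ) [IsLocallyFiniteMeasure σ]
    (Ψ : ℝ → 𝓗 →L[ℂ] 𝓗)
    -- Ψ(s) ≥ 0 σ-a.e.
    (hΨpos : ∀ᵐ s ∂σ, ∀ k : 𝓗,
      0 ≤ (@inner ℂ _ _ k (Ψ s k)).re ∧ (@inner ℂ _ _ k (Ψ s k)).im = 0)
    -- the class 𝓛²(Σ;𝓗) of square-integrable functions
    (SqInt : (ℝ → 𝓗) → Prop)
    (hSqInt : ∀ f, SqInt f ↔ Measurable f ∧
      Integrable (fun s => (@inner ℂ _ _ (f s) (Ψ s (f s))).re) σ)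
    -- the quotient map π_Σ : 𝓛²(Σ;𝓗) → L²(Σ;𝓗)
    (π : (ℝ → 𝓗) → L)
    (hπadd : ∀ f g, SqInt f → SqInt g → π (f + g) = π f + π g)
    (hπsmul : ∀ (c : ℂ) f, SqInt f → π (c • f) = c • π f)
    (hπsurj : ∀ x : L, ∃ f, SqInt f ∧ π f = x)
    (hπinner : ∀ f g, SqInt f → SqInt g →
      (@inner ℂ _ _ (π f) (π g)) = ∫ s, (@inner ℂ _ _ (f s) (Ψ s (g s))) ∂σ) :
    -- the multiplication operator Λ_Σ (as a linear relation: its graph)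
    let Lam : Submodule ℂ (L × L) := Submodule.span ℂ
      {p : L × L | ∃ f, SqInt f ∧ SqInt (fun s => s • f s) ∧
        p = (π f, π (fun s => s • f s))}
    -- Λ_Σ is self-adjoint: Λ_Σ = (Λ_Σ)*
    (Lam : Set (L × L)) = relAdjSet (Lam : Set (L × L)) := by
  intro Lam
  set S : Set (L × L) := {p : L × L | ∃ f, SqInt f ∧ SqInt (fun s => s • f s) ∧
        p = (π f, π (fun s => s • f s))} with hSdef
  -- basic facts
  have hmeasInt : ∀ f, SqInt f → Measurable f ∧
      Integrable (fun s => (@inner ℂ _ _ (f s) (Ψ s (f s))).re) σ := fun f hf => (hSqInt f).1 hf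
  -- closure of SqInt under multiplication by a bounded measurable real function
  have SqIntSmul : ∀ (c : ℝ → ℝ) (C : ℝ), Measurable c → (∀ s, |c s| ≤ C) →
      ∀ f, SqInt f → SqInt (fun s => c s • f s) := by
    intro c C hc hC f hf
    obtain ⟨hfm, hfI⟩ := (hSqInt f).1 hf
    rw [hSqInt]
    constructor
    · exact hc.smul hfm
    · have heq : (fun s => (@inner ℂ _ _ (c s • f s) (Ψ s (c s • f s))).re)
          = fun s => (c s * c s) * (@inner ℂ _ _ (f s) (Ψ s (f s))).re := by
        funext s
        rw [aux_inner]
        simp [Complex.ofReal_mul]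
      rw [heq]
      refine Integrable.mono' ((hfI.abs).const_mul (C ^ 2)) ?_ ?_
      · exact ((hc.mul hc).aestronglyMeasurable.mul hfI.aestronglyMeasurable)
      · refine Filter.Eventually.of_forall fun s => ?_
        have h1 : |c s| ≤ C := hC s
        have h0 : (0:ℝ) ≤ |c s| := abs_nonneg _
        have : ‖(c s * c s) * (@inner ℂ _ _ (f s) (Ψ s (f s))).re‖
            = (|c s| * |c s|) * |(@inner ℂ _ _ (f s) (Ψ s (f s))).re| := by
          rw [Real.norm_eq_abs, abs_mul, abs_mul]
        rw [this]
        have : |c s| * |c s| ≤ C ^ 2 := by nlinarith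
        exact mul_le_mul_of_nonneg_right this (abs_nonneg _) |>.trans_eq rfl
  -- the forward inclusion: Λ ⊆ Λ*
  have sub1 : (Lam : Set (L × L)) ⊆ relAdjSet (Lam : Set (L × L)) := by
    intro p hp q hq
    refine Submodule.span_induction₂
      (p := fun x y _ _ => (@inner ℂ _ _ x.2 y.1) = @inner ℂ _ _ x.1 y.2)
      ?_ ?_ ?_ ?_ ?_ ?_ ?_ hp hq
    · rintro x y ⟨f, hf, hsf, rfl⟩ ⟨g, hg, hsg, rfl⟩
      show (@inner ℂ _ _ (π fun s => s • f s) (π g)) = @inner ℂ _ _ (π f) (π fun s => s • g s)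
      rw [hπinner _ _ hsf hg, hπinner _ _ hf hsg]
      refine integral_congr_ae (Filter.Eventually.of_forall fun s => ?_)
      have h1 := aux_inner (Ψ s) s 1 (f s) (g s)
      have h2 := aux_inner (Ψ s) 1 s (f s) (g s)
      simp only [one_smul, mul_one, one_mul] at h1 h2
      simp only [h1, h2]
    · intro y _; simp
    · intro x _; simp
    · intro x y z _ _ _ h1 h2
      simp only [Prod.fst_add, Prod.snd_add, inner_add_left]
      rw [h1, h2]
    · intro x y z _ _ _ h1 h2
      simp only [Prod.fst_add, Prod.snd_add, inner_add_right]
      rw [h1, h2]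
    · intro r x y _ _ h
      simp only [Prod.smul_fst, Prod.smul_snd, inner_smul_left]
      rw [h]
    · intro r x y _ _ h
      simp only [Prod.smul_fst, Prod.smul_snd, inner_smul_right]
      rw [h]
  -- the backward inclusion: Λ* ⊆ Λ
  have sub2 : relAdjSet (Lam : Set (L × L)) ⊆ (Lam : Set (L × L)) := by
    intro p hp
    obtain ⟨g, hg, hgπ⟩ := hπsurj p.1
    obtain ⟨hgm, hgI⟩ := (hSqInt g).1 hg
    set φ : ℝ → ℝ := fun s => (@inner ℂ _ _ (g s) (Ψ s (g s))).re with hφdef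
    have hφae : ∀ᵐ s ∂σ, 0 ≤ φ s ∧ (@inner ℂ _ _ (g s) (Ψ s (g s))).im = 0 :=
      hΨpos.mono fun s h => ⟨(h (g s)).1, (h (g s)).2⟩
    set ind : ℕ → ℝ → ℝ := fun n s => if |s| ≤ (n : ℝ) then (1 : ℝ) else 0 with hinddef
    have hindm : ∀ n, Measurable (ind n) := fun n =>
      Measurable.ite (measurableSet_le measurable_abs measurable_const)
        measurable_const measurable_const
    have hind01 : ∀ n s, ind n s = 0 ∨ ind n s = 1 := by
      intro n s; by_cases h : |s| ≤ (n : ℝ) <;> simp [hinddef, h]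
    have hindb : ∀ n s, |ind n s| ≤ 1 := by
      intro n s; rcases hind01 n s with h | h <;> rw [h] <;> norm_num
    have hindmul : ∀ n s, |ind n s * s| ≤ (n : ℝ) := by
      intro n s; by_cases h : |s| ≤ (n : ℝ)
      · simp only [hinddef]; rw [if_pos h, one_mul]; exact h
      · simp only [hinddef]; rw [if_neg h, zero_mul, abs_zero]; positivity
    have hsmulmul : ∀ n s, |s * (ind n s * s)| ≤ (n : ℝ) ^ 2 := by
      intro n s; by_cases h : |s| ≤ (n : ℝ)
      · simp only [hinddef]; rw [if_pos h, one_mul, abs_mul]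
        calc |s| * |s| ≤ (n:ℝ) * (n:ℝ) := by
              exact mul_le_mul h h (abs_nonneg s) (le_trans (abs_nonneg s) h)
          _ = (n:ℝ)^2 := by ring
      · simp only [hinddef]; rw [if_neg h, zero_mul, mul_zero, abs_zero]; positivity
    -- the truncated test functions
    have hfN : ∀ n, SqInt (fun s => (ind n s * s) • g s) := fun n =>
      SqIntSmul _ (n : ℝ) ((hindm n).mul measurable_id) (hindmul n) g hg
    have hsfNeq : ∀ n : ℕ, (fun s => s • ((ind n s * s) • g s))
        = fun s => (s * (ind n s * s)) • g s := fun n => funext fun s => smul_smul _ _ _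
    have hsfN : ∀ n, SqInt (fun s => s • ((ind n s * s) • g s)) := by
      intro n; rw [hsfNeq n]
      exact SqIntSmul _ ((n : ℝ) ^ 2) (measurable_id.mul ((hindm n).mul measurable_id))
        (hsmulmul n) g hg
    have memS : ∀ n : ℕ,
        (π (fun s => (ind n s * s) • g s), π (fun s => s • ((ind n s * s) • g s)))
          ∈ (Lam : Set (L × L)) := fun n =>
      Submodule.subset_span ⟨fun s => (ind n s * s) • g s, hfN n, hsfN n, rfl⟩
    have En : ∀ n : ℕ, (@inner ℂ _ _ p.2 (π (fun s => (ind n s * s) • g s)))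
        = @inner ℂ _ _ p.1 (π (fun s => s • ((ind n s * s) • g s))) := fun n => hp _ (memS n)
    set A : ℕ → ℝ := fun n => ∫ s, (ind n s * s) ^ 2 * φ s ∂σ with hAdef
    -- the common a.e. identification of integrands
    have hsc : ∀ n s, s * (ind n s * s) = (ind n s * s) ^ 2 := by
      intro n s; rcases hind01 n s with h | h <;> rw [h] <;> ring
    have hcc : ∀ n s, (ind n s * s) * (ind n s * s) = (ind n s * s) ^ 2 := by
      intro n s; ring
    have innerA : ∀ n : ℕ, (@inner ℂ _ _ p.1 (π (fun s => s • ((ind n s * s) • g s))))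
        = ((A n : ℝ) : ℂ) := by
      intro n
      rw [← hgπ, hπinner g _ hg (hsfN n)]
      simp only [hAdef]
      refine Eq.trans ?_ (integral_ofReal (𝕜 := ℂ))
      refine integral_congr_ae (hφae.mono fun s hs => ?_)
      have h1 : (@inner ℂ _ _ (g s) (Ψ s (s • (ind n s * s) • g s)))
          = ((s * (ind n s * s) : ℝ) : ℂ) * @inner ℂ _ _ (g s) (Ψ s (g s)) := by
        rw [smul_smul]; exact aux_inner_r (Ψ s) _ _ _
      simp only [h1, hsc n s]
      exact aux_real_mul hs.2 _
    have innerFF : ∀ n : ℕ, (@inner ℂ _ _ (π (fun s => (ind n s * s) • g s))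
        (π (fun s => (ind n s * s) • g s))) = ((A n : ℝ) : ℂ) := by
      intro n
      rw [hπinner _ _ (hfN n) (hfN n)]
      simp only [hAdef]
      refine Eq.trans ?_ (integral_ofReal (𝕜 := ℂ))
      refine integral_congr_ae (hφae.mono fun s hs => ?_)
      have h1 := aux_inner (Ψ s) (ind n s * s) (ind n s * s) (g s) (g s)
      simp only [h1, hcc n s]
      exact aux_real_mul hs.2 _
    have hA0 : ∀ n, 0 ≤ A n := fun n =>
      integral_nonneg_of_ae (hφae.mono fun s hs => mul_nonneg (sq_nonneg _) hs.1)
    have hAint : ∀ n : ℕ, Integrable (fun s => (ind n s * s) ^ 2 * φ s) σ := by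
      intro n
      refine Integrable.mono' ((hgI.abs).const_mul ((n : ℝ) ^ 2)) ?_ ?_
      · exact ((((hindm n).mul measurable_id).pow_const 2).aestronglyMeasurable.mul
          hgI.aestronglyMeasurable)
      · refine Filter.Eventually.of_forall fun s => ?_
        have h1 := hindmul n s
        have : ‖(ind n s * s) ^ 2 * φ s‖ = (ind n s * s) ^ 2 * |φ s| := by
          rw [Real.norm_eq_abs, abs_mul, abs_pow, sq_abs]
        rw [this]
        have h2 : (ind n s * s) ^ 2 ≤ (n : ℝ) ^ 2 := by
          rw [← sq_abs]; exact pow_le_pow_left₀ (abs_nonneg _) h1 2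
        exact mul_le_mul_of_nonneg_right h2 (abs_nonneg _)
    have hAle : ∀ n, A n ≤ ‖p.2‖ ^ 2 := by
      intro n
      set x := π (fun s => (ind n s * s) • g s) with hxdef
      have e1 : ‖x‖ ^ 2 = A n := by
        have := @inner_self_eq_norm_sq ℂ _ _ _ _ x
        rw [innerFF n] at this; simpa using this.symm
      have e2 : (@inner ℂ _ _ p.2 x) = ((A n : ℝ) : ℂ) := (En n).trans (innerA n)
      have e3 : ‖(@inner ℂ _ _ p.2 x)‖ ≤ ‖p.2‖ * ‖x‖ := norm_inner_le_norm _ _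
      rw [e2] at e3
      have e4 : A n ≤ ‖p.2‖ * ‖x‖ := by
        calc A n ≤ |A n| := le_abs_self _
          _ = ‖((A n : ℝ) : ℂ)‖ := by rw [Complex.norm_real, Real.norm_eq_abs]
          _ ≤ ‖p.2‖ * ‖x‖ := e3
      nlinarith [norm_nonneg x, norm_nonneg p.2, e1, e4]
    -- square integrability of s • g s
    have hsg : SqInt (fun s => s • g s) := by
      rw [hSqInt]
      constructor
      · exact measurable_id.smul hgm
      · have heq : (fun s => (@inner ℂ _ _ (s • g s) (Ψ s (s • g s))).re)
            = fun s => (s * s) * φ s := by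
          funext s
          rw [aux_inner (Ψ s) s s (g s) (g s)]
          simp [Complex.ofReal_mul, hφdef]
        rw [heq]
        refine ⟨(measurable_id.mul measurable_id).aestronglyMeasurable.mul
          hgI.aestronglyMeasurable, ?_⟩
        rw [hasFiniteIntegral_iff_ofReal (hφae.mono fun s hs =>
          mul_nonneg (mul_self_nonneg s) hs.1)]
        set F : ℕ → ℝ → ENNReal := fun n s => ENNReal.ofReal ((ind n s * s) ^ 2 * φ s)
          with hFdef
        have hFmono : ∀ s, Monotone fun n => F n s := by
          intro s m n hmn
          by_cases hsign : 0 ≤ φ s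
          · apply ENNReal.ofReal_le_ofReal
            refine mul_le_mul_of_nonneg_right ?_ hsign
            by_cases h : |s| ≤ (m : ℝ)
            · have h2 : |s| ≤ (n : ℝ) := le_trans h (by exact_mod_cast Nat.cast_le.2 hmn)
              have e1 : ind m s = 1 := by simp [hinddef, h]
              have e2 : ind n s = 1 := by simp [hinddef, h2]
              rw [e1, e2]
            · have e1 : ind m s = 0 := by simp [hinddef, h]
              rw [e1, zero_mul]
              simpa using sq_nonneg (ind n s * s)
          · have hz : ∀ k : ℕ, F k s = 0 := by
              intro k
              simp only [hFdef]
              rw [ENNReal.ofReal_eq_zero]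
              exact mul_nonpos_of_nonneg_of_nonpos (sq_nonneg _) (le_of_not_ge hsign)
            show F m s ≤ F n s
            rw [hz m, hz n]
        have hsup : ∀ s, (⨆ n, F n s) = ENNReal.ofReal ((s * s) * φ s) := by
          intro s
          by_cases hsign : 0 ≤ φ s
          · obtain ⟨n, hn⟩ := exists_nat_ge |s|
            apply le_antisymm
            · refine iSup_le fun k => ENNReal.ofReal_le_ofReal ?_
              refine mul_le_mul_of_nonneg_right ?_ hsign
              rcases hind01 k s with h | h
              · rw [h]; simpa using mul_self_nonneg s
              · rw [h, one_mul, sq]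
            · have : F n s = ENNReal.ofReal ((s * s) * φ s) := by
                simp only [hFdef, hinddef]; rw [if_pos hn, one_mul, sq]
              rw [← this]; exact le_iSup (fun k => F k s) n
          · have hz : ∀ k : ℕ, F k s = 0 := by
              intro k; simp only [hFdef]; rw [ENNReal.ofReal_eq_zero]
              exact mul_nonpos_of_nonneg_of_nonpos (sq_nonneg _) (le_of_not_ge hsign)
            have hz2 : ENNReal.ofReal ((s * s) * φ s) = 0 := by
              rw [ENNReal.ofReal_eq_zero]
              exact mul_nonpos_of_nonneg_of_nonpos (mul_self_nonneg s) (le_of_not_ge hsign)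
            simp [hz, hz2]
        have hFmeas : ∀ n, AEMeasurable (F n) σ := by
          intro n
          exact ENNReal.measurable_ofReal.comp_aemeasurable
            (((((hindm n).mul measurable_id).pow_const 2).aemeasurable).mul hgI.aemeasurable)
        have key : ∫⁻ s, ENNReal.ofReal ((s * s) * φ s) ∂σ ≤ ENNReal.ofReal (‖p.2‖ ^ 2) := by
          have e1 : ∫⁻ s, ENNReal.ofReal ((s * s) * φ s) ∂σ = ⨆ n, ∫⁻ s, F n s ∂σ := by
            rw [← lintegral_iSup' hFmeas (Filter.Eventually.of_forall hFmono)]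
            exact lintegral_congr fun s => (hsup s).symm
          rw [e1]
          refine iSup_le fun n => ?_
          have e2 : ∫⁻ s, F n s ∂σ = ENNReal.ofReal (A n) := by
            rw [hAdef]
            exact (ofReal_integral_eq_lintegral_ofReal (hAint n)
              (hφae.mono fun s hs => mul_nonneg (sq_nonneg _) hs.1)).symm
          rw [e2]
          exact ENNReal.ofReal_le_ofReal (hAle n)
        exact lt_of_le_of_lt key ENNReal.ofReal_lt_top
    -- p.2 = π (fun s => s • g s)
    have key0 : ∀ u, SqInt u →
        (@inner ℂ _ _ (p.2 - π (fun s => s • g s)) (π u)) = 0 := by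
      intro u hu
      obtain ⟨hum, huI⟩ := (hSqInt u).1 hu
      set φu : ℝ → ℝ := fun s => (@inner ℂ _ _ (u s) (Ψ s (u s))).re with hφudef
      have hφuae : ∀ᵐ s ∂σ, 0 ≤ φu s ∧ (@inner ℂ _ _ (u s) (Ψ s (u s))).im = 0 :=
        hΨpos.mono fun s h => ⟨(h (u s)).1, (h (u s)).2⟩
      set D : L := p.2 - π (fun s => s • g s) with hDdef
      have hun : ∀ n, SqInt (fun s => ind n s • u s) := fun n =>
        SqIntSmul (ind n) 1 (hindm n) (hindb n) u hu
      have hsuneq : ∀ n : ℕ, (fun s => s • (ind n s • u s)) = fun s => (s * ind n s) • u s :=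
        fun n => funext fun s => smul_smul _ _ _
      have hsunb : ∀ n : ℕ, ∀ s, |s * ind n s| ≤ (n : ℝ) := by
        intro n s; by_cases h : |s| ≤ (n : ℝ)
        · have e : ind n s = 1 := by simp [hinddef, h]
          rw [e, mul_one]; exact h
        · have e : ind n s = 0 := by simp [hinddef, h]
          rw [e, mul_zero, abs_zero]; positivity
      have hsun : ∀ n, SqInt (fun s => s • (ind n s • u s)) := by
        intro n; rw [hsuneq n]
        exact SqIntSmul _ (n : ℝ) (measurable_id.mul (hindm n)) (hsunb n) u hu
      have hEn : ∀ n : ℕ, (@inner ℂ _ _ p.2 (π (fun s => ind n s • u s)))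
          = @inner ℂ _ _ p.1 (π (fun s => s • (ind n s • u s))) := fun n =>
        hp _ (Submodule.subset_span ⟨fun s => ind n s • u s, hun n, hsun n, rfl⟩)
      have hh : ∀ n : ℕ, (@inner ℂ _ _ (π (fun s => s • g s)) (π (fun s => ind n s • u s)))
          = @inner ℂ _ _ p.1 (π (fun s => s • (ind n s • u s))) := by
        intro n
        rw [hπinner _ _ hsg (hun n), ← hgπ, hπinner g _ hg (hsun n)]
        refine integral_congr_ae (Filter.Eventually.of_forall fun s => ?_)
        have h1 := aux_inner (Ψ s) s (ind n s) (g s) (u s)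
        have h2 : (@inner ℂ _ _ (g s) (Ψ s (s • ind n s • u s)))
            = ((s * ind n s : ℝ) : ℂ) * @inner ℂ _ _ (g s) (Ψ s (u s)) := by
          rw [smul_smul]; exact aux_inner_r (Ψ s) _ _ _
        simp only [h1, h2]
      have hDn : ∀ n : ℕ, (@inner ℂ _ _ D (π (fun s => ind n s • u s))) = 0 := by
        intro n
        rw [hDdef, inner_sub_left, hEn n, hh n, sub_self]
      have hvn : ∀ n, SqInt (fun s => (1 - ind n s) • u s) := fun n =>
        SqIntSmul _ 1 (measurable_const.sub (hindm n)) (fun s => by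
          show |1 - ind n s| ≤ 1; rcases hind01 n s with h | h <;> rw [h] <;> norm_num) u hu
      have hsplit : ∀ n : ℕ,
          π u = π (fun s => ind n s • u s) + π (fun s => (1 - ind n s) • u s) := by
        intro n
        have he : (fun s => ind n s • u s) + (fun s => (1 - ind n s) • u s) = u := by
          funext s
          show ind n s • u s + (1 - ind n s) • u s = u s
          rw [← add_smul]; simp
        rw [← hπadd _ _ (hun n) (hvn n), he]
      set B : ℕ → ℝ := fun n => ∫ s, (1 - ind n s) ^ 2 * φu s ∂σ with hBdef
      have hvb : ∀ n : ℕ, ∀ s : ℝ, (1 - ind n s) ^ 2 ≤ 1 := by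
        intro n s; rcases hind01 n s with h | h <;> rw [h] <;> norm_num
      have hnormv : ∀ n : ℕ, ‖π (fun s => (1 - ind n s) • u s)‖ ^ 2 = B n := by
        intro n
        have hBi : (@inner ℂ _ _ (π (fun s => (1 - ind n s) • u s))
            (π (fun s => (1 - ind n s) • u s))) = ((B n : ℝ) : ℂ) := by
          rw [hπinner _ _ (hvn n) (hvn n)]
          simp only [hBdef]
          refine Eq.trans ?_ (integral_ofReal (𝕜 := ℂ))
          refine integral_congr_ae (hφuae.mono fun s hs => ?_)
          have h1 := aux_inner (Ψ s) (1 - ind n s) (1 - ind n s) (u s) (u s)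
          have h2 : (1 - ind n s) * (1 - ind n s) = (1 - ind n s) ^ 2 := by ring
          simp only [h1, h2]
          exact aux_real_mul hs.2 _
        have := @inner_self_eq_norm_sq ℂ _ _ _ _ (π (fun s => (1 - ind n s) • u s))
        rw [hBi] at this; simpa using this.symm
      have hBtend : Filter.Tendsto B Filter.atTop (nhds 0) := by
        have hmeas : ∀ n : ℕ, AEStronglyMeasurable (fun s => (1 - ind n s) ^ 2 * φu s) σ :=
          fun n => ((measurable_const.sub (hindm n)).pow_const 2).aestronglyMeasurable.mul
            huI.aestronglyMeasurable
        have hbd : ∀ n : ℕ, ∀ᵐ s ∂σ, ‖(1 - ind n s) ^ 2 * φu s‖ ≤ |φu s| := by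
          intro n
          refine Filter.Eventually.of_forall fun s => ?_
          rw [Real.norm_eq_abs, abs_mul, abs_pow, sq_abs]
          calc (1 - ind n s) ^ 2 * |φu s| ≤ 1 * |φu s| :=
                mul_le_mul_of_nonneg_right (hvb n s) (abs_nonneg _)
            _ = |φu s| := one_mul _
        have hlim : ∀ᵐ s ∂σ, Filter.Tendsto (fun n : ℕ => (1 - ind n s) ^ 2 * φu s)
            Filter.atTop (nhds 0) := by
          refine Filter.Eventually.of_forall fun s => ?_
          obtain ⟨N, hN⟩ := exists_nat_ge |s|
          refine tendsto_atTop_of_eventually_const (i₀ := N) fun n hn => ?_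
          have h : |s| ≤ (n : ℝ) := le_trans hN (by exact_mod_cast hn)
          have e : ind n s = 1 := by simp [hinddef, h]
          rw [e]; ring
        have := tendsto_integral_of_dominated_convergence (fun s => |φu s|)
          hmeas (huI.abs) hbd hlim
        simpa using this
      have hbound : ∀ n : ℕ, ‖(@inner ℂ _ _ D (π u))‖ ^ 2 ≤ ‖D‖ ^ 2 * B n := by
        intro n
        have e1 : (@inner ℂ _ _ D (π u))
            = @inner ℂ _ _ D (π (fun s => (1 - ind n s) • u s)) := by
          rw [hsplit n, inner_add_right, hDn n, zero_add]
        rw [e1]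
        have e2 := norm_inner_le_norm (𝕜 := ℂ) D (π (fun s => (1 - ind n s) • u s))
        have e4 := hnormv n
        nlinarith [norm_nonneg (π (fun s => (1 - ind n s) • u s)), norm_nonneg D,
          norm_nonneg (@inner ℂ _ _ D (π (fun s => (1 - ind n s) • u s)))]
      have h0 : ‖(@inner ℂ _ _ D (π u))‖ ^ 2 ≤ 0 := by
        have ht : Filter.Tendsto (fun n => ‖D‖ ^ 2 * B n) Filter.atTop (nhds 0) := by
          simpa using hBtend.const_mul (‖D‖ ^ 2)
        exact ge_of_tendsto' ht hbound
      have hz : ‖(@inner ℂ _ _ D (π u))‖ = 0 := by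
        nlinarith [norm_nonneg (@inner ℂ _ _ D (π u))]
      exact norm_eq_zero.mp hz
    obtain ⟨w, hw, hwπ⟩ := hπsurj (p.2 - π (fun s => s • g s))
    have hD := key0 w hw
    rw [hwπ] at hD
    have hD2 : p.2 = π (fun s => s • g s) := by
      have := inner_self_eq_zero.mp hD
      exact sub_eq_zero.mp this
    have : p = (π g, π (fun s => s • g s)) := by
      rw [hgπ, ← hD2]
    rw [this]
    exact Submodule.subset_span ⟨g, hg, hsg, rfl⟩
  exact Set.Subset.antisymm sub1 sub2

end
end

section
/- Let Φ : ℂ₊ → [𝓗] be a holomorphic operator-valued function on the upper half-plane of a Hilbert space 𝓗 with Im Φ(λ) ≥ 0 for all λ ∈ ℂ₊. Then the strong limit B := s-lim_{y→+∞} (1/(iy)) Φ(iy) exists and B ≥ 0. -/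
open Complex Filter Metric Set

noncomputable section

lemma key_ineq {φ : ℂ → ℂ} (hol : DifferentiableOn ℂ φ {z : ℂ | 0 < z.im})
    (hpos : ∀ z : ℂ, 0 < z.im → 0 < (φ z).im) {y Y : ℝ} (hy : 0 < y) (hyY : y ≤ Y) :
    Complex.normSq (φ (I*y) - φ (I*Y)) * (y*Y)
      ≤ (φ (I*y)).im * (φ (I*Y)).im * (Y-y)^2 := by
  have hY : 0 < Y := lt_of_lt_of_le hy hyY
  have him_iy : (0:ℝ) < ((I:ℂ)*(y:ℂ)).im := by simp [hy]
  have him_iY : (0:ℝ) < ((I:ℂ)*(Y:ℂ)).im := by simp [hY]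
  set q := φ (I*Y) with hq_def
  set p := φ (I*y) with hp_def
  have hqim : 0 < q.im := hpos _ him_iY
  have hpim : 0 < p.im := hpos _ him_iy
  -- Cayley transform K : ball 0 1 → upper half plane
  set K : ℂ → ℂ := fun w => I*(Y:ℂ)*(1+w)/(1-w) with hK_def
  have hKmem : ∀ w ∈ ball (0:ℂ) 1, 0 < (K w).im := by
    intro w hw
    have hw1 : Complex.normSq w < 1 := by
      have := mem_ball_zero_iff.1 hw
      have h2 : ‖w‖ < 1 := this
      nlinarith [Complex.sq_norm w, norm_nonneg w]
    have hden : (1:ℂ) - w ≠ 0 := by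
      intro h
      have : w = 1 := by linear_combination -h
      rw [this] at hw1; simp [Complex.normSq] at hw1
    have hns : 0 < Complex.normSq (1 - w) := Complex.normSq_pos.2 hden
    simp only [hK_def, Complex.div_im, Complex.mul_im, Complex.mul_re, Complex.I_re,
      Complex.I_im, Complex.ofReal_re, Complex.ofReal_im, Complex.add_re, Complex.add_im,
      Complex.one_re, Complex.one_im, Complex.sub_re, Complex.sub_im]
    rw [Complex.normSq_apply] at hw1
    rw [Complex.normSq_apply, Complex.sub_re, Complex.sub_im, Complex.one_re, Complex.one_im] at hns
    rw [div_sub_div_same]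
    apply div_pos _ hns
    nlinarith [hw1, hY]
  have hKdiff : DifferentiableOn ℂ K (ball 0 1) := by
    intro w hw
    have hden : (1:ℂ) - w ≠ 0 := by
      intro h
      have hw1 : ‖w‖ < 1 := mem_ball_zero_iff.1 hw
      have : w = 1 := by linear_combination -h
      rw [this] at hw1; simp at hw1
    exact (((differentiableAt_const _).mul ((differentiableAt_const _).add
      differentiableAt_id)).div ((differentiableAt_const _).sub differentiableAt_id)
      hden).differentiableWithinAt
  set mo : ℂ → ℂ := fun u => (u - q)/(u - (starRingEnd ℂ) q) with hmo_def
  have hden2 : ∀ u : ℂ, 0 < u.im → u - (starRingEnd ℂ) q ≠ 0 := by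
    intro u hu h
    have : u.im - ((starRingEnd ℂ) q).im = 0 := by rw [← Complex.sub_im, h]; rfl
    rw [Complex.conj_im] at this
    linarith
  have hnormSq : ∀ u : ℂ, Complex.normSq (u - (starRingEnd ℂ) q)
      = Complex.normSq (u - q) + 4*u.im*q.im := by
    intro u
    simp only [Complex.normSq_apply, Complex.sub_re, Complex.sub_im, Complex.conj_re,
      Complex.conj_im]
    ring
  have hmo_lt : ∀ u : ℂ, 0 < u.im → ‖mo u‖ < 1 := by
    intro u hu
    rw [hmo_def]
    simp only [norm_div]
    rw [div_lt_one (norm_pos_iff.2 (hden2 u hu))]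
    rw [Complex.norm_def, Complex.norm_def]
    apply Real.sqrt_lt_sqrt (Complex.normSq_nonneg _)
    rw [hnormSq u]
    nlinarith [hu, hqim]
  set F : ℂ → ℂ := fun w => mo (φ (K w)) with hF_def
  have hφKmem : ∀ w ∈ ball (0:ℂ) 1, 0 < (φ (K w)).im := fun w hw => hpos _ (hKmem w hw)
  have hFdiff : DifferentiableOn ℂ F (ball 0 1) := by
    intro w hw
    have h2 : DifferentiableWithinAt ℂ (fun w => φ (K w)) (ball 0 1) w := by
      apply DifferentiableOn.comp hol hKdiff _ w hw
      exact fun w hw => hKmem w hw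
    have h3 : DifferentiableAt ℂ mo (φ (K w)) := by
      apply DifferentiableAt.div (differentiableAt_id.sub (differentiableAt_const _))
        (differentiableAt_id.sub (differentiableAt_const _))
      exact hden2 _ (hφKmem w hw)
    exact h3.comp_differentiableWithinAt w h2
  have hmaps : MapsTo F (ball (0:ℂ) 1) (ball (0:ℂ) 1) := by
    intro w hw
    rw [mem_ball_zero_iff]
    exact hmo_lt _ (hφKmem w hw)
  have hF0 : F 0 = 0 := by
    have hK0 : K 0 = I*(Y:ℂ) := by simp [hK_def]
    simp only [hF_def, hK0, ← hq_def, hmo_def]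
    simp
  set t : ℝ := (y - Y)/(y + Y) with ht_def
  have hyY0 : (0:ℝ) < y + Y := by linarith
  have habs_t : ‖((t:ℝ):ℂ)‖ < 1 := by
    rw [Complex.norm_real, Real.norm_eq_abs, ht_def, abs_div, abs_of_pos hyY0, div_lt_one hyY0]
    rw [abs_of_nonpos (by linarith)]
    linarith
  have hyY0' : ((y:ℂ) + (Y:ℂ)) ≠ 0 := by
    exact_mod_cast (show ((y+Y:ℝ):ℂ) ≠ 0 by exact_mod_cast ne_of_gt hyY0)
  have hden_t : (1:ℂ) - ((t:ℝ):ℂ) ≠ 0 := by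
    intro h
    have : ‖((t:ℝ):ℂ)‖ = 1 := by
      have : ((t:ℝ):ℂ) = 1 := by linear_combination -h
      rw [this]; simp
    rw [this] at habs_t; exact lt_irrefl _ habs_t
  have hKt : K ((t:ℝ):ℂ) = I*(y:ℂ) := by
    rw [hK_def]
    simp only
    rw [div_eq_iff hden_t, ht_def]
    push_cast
    field_simp
    ring
  have hSch := norm_le_norm_of_mapsTo_ball_self hFdiff (hmaps.mono_right ball_subset_closedBall) hF0 habs_t
  rw [hF_def] at hSch
  simp only at hSch
  rw [hKt, ← hp_def, hmo_def] at hSch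
  simp only [norm_div, Complex.norm_real, Real.norm_eq_abs, ht_def] at hSch
  rw [abs_of_pos hyY0, abs_of_nonpos (by linarith : y - Y ≤ 0),
    div_le_div_iff₀ (norm_pos_iff.2 (hden2 p hpim)) hyY0] at hSch
  -- square the inequality
  have hsq : Complex.normSq (p - q) * (y+Y)^2
      ≤ (Y - y)^2 * (Complex.normSq (p - q) + 4*p.im*q.im) := by
    have h1 : (‖p - q‖ * (y+Y))^2 ≤ (-(y - Y) * ‖p - (starRingEnd ℂ) q‖)^2 := by
      apply pow_le_pow_left₀ _ hSch
      positivity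
    rw [mul_pow, mul_pow, Complex.sq_norm, Complex.sq_norm, hnormSq p] at h1
    nlinarith [h1]
  nlinarith [hsq, Complex.normSq_nonneg (p - q)]

lemma im_ratio_mono {φ : ℂ → ℂ} (hol : DifferentiableOn ℂ φ {z : ℂ | 0 < z.im})
    (hpos : ∀ z : ℂ, 0 < z.im → 0 < (φ z).im) {y Y : ℝ} (hy : 0 < y) (hyY : y ≤ Y) :
    (φ (I*Y)).im * y ≤ (φ (I*y)).im * Y := by
  have hk := key_ineq hol hpos hy hyY
  have hY : 0 < Y := lt_of_lt_of_le hy hyY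
  set u := (φ (I*(y:ℂ))).im with hu_def
  set v := (φ (I*(Y:ℂ))).im with hv_def
  have hu : 0 < u := hpos _ (by simp [hy])
  have hv : 0 < v := hpos _ (by simp [hY])
  have hns : (u - v)^2 ≤ Complex.normSq (φ (I*y) - φ (I*Y)) := by
    rw [Complex.normSq_apply, Complex.sub_im, Complex.sub_re, ← hu_def, ← hv_def]
    nlinarith [sq_nonneg ((φ (I*(y:ℂ))).re - (φ (I*(Y:ℂ))).re)]
  have hchain : (u - v)^2 * (y*Y) ≤ u * v * (Y-y)^2 :=
    le_trans (mul_le_mul_of_nonneg_right hns (by positivity)) hk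
  by_contra hcon
  push_neg at hcon
  have h1 : u < v := by nlinarith
  have h2 : 0 < v*Y - u*y := by nlinarith
  nlinarith [mul_pos (sub_pos.2 hcon) h2]

lemma abs_diff_le {φ : ℂ → ℂ} (hol : DifferentiableOn ℂ φ {z : ℂ | 0 < z.im})
    (hpos : ∀ z : ℂ, 0 < z.im → 0 < (φ z).im) {y Y : ℝ} (hy : 0 < y) (hyY : y ≤ Y) :
    ‖φ (I*Y) - φ (I*y)‖ * y ≤ (φ (I*y)).im * (Y - y) := by
  have hk := key_ineq hol hpos hy hyY
  have hm := im_ratio_mono hol hpos hy hyY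
  have hY : 0 < Y := lt_of_lt_of_le hy hyY
  set u := (φ (I*(y:ℂ))).im with hu_def
  set v := (φ (I*(Y:ℂ))).im with hv_def
  have hu : 0 < u := hpos _ (by simp [hy])
  have hv : 0 < v := hpos _ (by simp [hY])
  have hsq : (‖φ (I*Y) - φ (I*y)‖ * y)^2 ≤ (u * (Y - y))^2 := by
    rw [mul_pow, mul_pow, norm_sub_rev, Complex.sq_norm]
    have h1 : Complex.normSq (φ (I*(y:ℂ)) - φ (I*(Y:ℂ))) * (y^2 * Y) ≤ u*v*(Y-y)^2 * y := by
      nlinarith [hk]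
    nlinarith [h1, Complex.normSq_nonneg (φ (I*(y:ℂ)) - φ (I*(Y:ℂ))), mul_pos hu hv,
      sq_nonneg (Y - y), mul_le_mul_of_nonneg_right hm (mul_nonneg (le_of_lt hu) (sq_nonneg (Y-y)))]
  have h2 : 0 ≤ u * (Y - y) := mul_nonneg (le_of_lt hu) (by linarith)
  exact le_of_pow_le_pow_left₀ two_ne_zero h2 hsq

set_option maxHeartbeats 1000000 in
lemma lemA {φ : ℂ → ℂ} (hol : DifferentiableOn ℂ φ {z : ℂ | 0 < z.im})
    (hpos : ∀ z : ℂ, 0 < z.im → 0 < (φ z).im) :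
    ∃ c : ℝ, 0 ≤ c ∧
      Filter.Tendsto (fun y : ℝ => (I*(y:ℂ))⁻¹ * φ (I*y)) Filter.atTop (nhds (c:ℂ)) := by
  classical
  set c : ℝ → ℝ := fun y => (φ (I*((max y 1 : ℝ):ℂ))).im / max y 1 with hc_def
  have hmax_pos : ∀ y : ℝ, (0:ℝ) < max y 1 := fun y => lt_of_lt_of_le one_pos (le_max_right _ _)
  have hcpos : ∀ y, 0 < c y := by
    intro y
    exact div_pos (hpos _ (by simp [hmax_pos y])) (hmax_pos y)
  have hanti : Antitone c := by
    intro a b hab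
    have hm : max a 1 ≤ max b 1 := max_le_max hab le_rfl
    rw [hc_def]
    simp only
    rw [div_le_div_iff₀ (hmax_pos b) (hmax_pos a)]
    exact im_ratio_mono hol hpos (hmax_pos a) hm
  have hbdd : BddBelow (Set.range c) := ⟨0, by rintro _ ⟨y, rfl⟩; exact le_of_lt (hcpos y)⟩
  have htend := tendsto_atTop_ciInf hanti hbdd
  set l := ⨅ y, c y with hl_def
  have hl0 : 0 ≤ l := le_ciInf fun y => le_of_lt (hcpos y)
  have hlle : ∀ y, l ≤ c y := fun y => ciInf_le hbdd y
  refine ⟨l, hl0, ?_⟩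
  rw [Metric.tendsto_atTop]
  intro ε hε
  set δ := min 1 (ε^2/(8*(l+1))) with hδ_def
  have hδ0 : 0 < δ := lt_min one_pos (by positivity)
  have hδ1 : δ ≤ 1 := min_le_left _ _
  have hδ2 : δ ≤ ε^2/(8*(l+1)) := min_le_right _ _
  obtain ⟨y₀, hy₀⟩ := (htend.eventually (gt_mem_nhds (lt_add_of_pos_right l hδ0))).exists
  set Y₀ := max y₀ 1 with hY₀_def
  have hY₀1 : (1:ℝ) ≤ Y₀ := le_max_right _ _
  have hY₀0 : (0:ℝ) < Y₀ := lt_of_lt_of_le one_pos hY₀1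
  have hmaxY₀ : max Y₀ 1 = Y₀ := max_eq_left hY₀1
  have hcY₀lt : c Y₀ < l + δ := by
    have h1 : c Y₀ ≤ c y₀ := hanti (le_max_left _ _)
    exact lt_of_le_of_lt h1 hy₀
  set u₀ := (φ (I*((Y₀:ℝ):ℂ))).im with hu₀_def
  have hcY₀ : c Y₀ = u₀ / Y₀ := by rw [hc_def]; simp only [hmaxY₀, hu₀_def]
  have hu₀pos : 0 < u₀ := hpos _ (by simp [hY₀0])
  set M := ‖φ (I*((Y₀:ℝ):ℂ))‖ with hM_def
  refine ⟨max Y₀ (M/δ) + 1, fun y hyN => ?_⟩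
  have hyY₀ : Y₀ ≤ y := le_trans (le_max_left _ _) (by linarith)
  have hy1 : (1:ℝ) ≤ y := le_trans hY₀1 hyY₀
  have hy0 : (0:ℝ) < y := lt_of_lt_of_le one_pos hy1
  have hMy : M ≤ δ * y := by
    have h1 : M/δ ≤ y := le_trans (le_max_right Y₀ (M/δ)) (by linarith)
    calc M = (M/δ) * δ := by field_simp
    _ ≤ y * δ := mul_le_mul_of_nonneg_right h1 (le_of_lt hδ0)
    _ = δ * y := mul_comm _ _
  set z := φ (I*((y:ℝ):ℂ)) with hz_def
  have hzim : 0 < z.im := hpos _ (by simp [hy0])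
  have hcy : c y = z.im / y := by rw [hc_def]; simp only [max_eq_left hy1, hz_def]
  have hl_le : l ≤ z.im / y := by rw [← hcy]; exact hlle y
  have hup : z.im / y < l + δ := by
    rw [← hcy]; exact lt_of_le_of_lt (hanti hyY₀) hcY₀lt
  -- bound on |z|
  have habsz : ‖z‖ ≤ M + (l + δ) * y := by
    have h1 := abs_diff_le hol hpos hY₀0 hyY₀
    have h2 : ‖z‖ ≤ M + ‖z - φ (I*((Y₀:ℝ):ℂ))‖ := by
      calc ‖z‖ = ‖φ (I*((Y₀:ℝ):ℂ)) + (z - φ (I*((Y₀:ℝ):ℂ)))‖ := by ring_nf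
      _ ≤ M + ‖z - φ (I*((Y₀:ℝ):ℂ))‖ := norm_add_le _ _
    have h3 : u₀ * (y - Y₀) ≤ (l + δ) * Y₀ * y := by
      have h4 : u₀ < (l + δ) * Y₀ := by
        rw [hcY₀, div_lt_iff₀ hY₀0] at hcY₀lt; linarith [hcY₀lt]
      have hld : 0 ≤ (l + δ) * Y₀ := le_trans (le_of_lt hu₀pos) h4.le
      calc u₀ * (y - Y₀) ≤ ((l + δ) * Y₀) * (y - Y₀) :=
            mul_le_mul_of_nonneg_right h4.le (by linarith)
      _ ≤ ((l + δ) * Y₀) * y := mul_le_mul_of_nonneg_left (by linarith) hld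
      _ = (l + δ) * Y₀ * y := rfl
    have h5 : ‖z - φ (I*((Y₀:ℝ):ℂ))‖ ≤ (l + δ) * y := by
      rw [← hz_def] at h1
      have := le_trans h1 h3
      calc ‖z - φ (I*((Y₀:ℝ):ℂ))‖
          = ‖z - φ (I*((Y₀:ℝ):ℂ))‖ * Y₀ / Y₀ := by field_simp
      _ ≤ (l + δ) * Y₀ * y / Y₀ := by exact div_le_div_of_nonneg_right this hY₀0.le
      _ = (l + δ) * y := by field_simp
    linarith
  -- coordinates of w
  set w := (I*((y:ℝ):ℂ))⁻¹ * z with hw_def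
  have hiy_re : ((I:ℂ)*((y:ℝ):ℂ)).re = 0 := by simp
  have hiy_im : ((I:ℂ)*((y:ℝ):ℂ)).im = y := by simp
  have hiy_nsq : Complex.normSq ((I:ℂ)*((y:ℝ):ℂ)) = y^2 := by
    rw [Complex.normSq_apply, hiy_re, hiy_im]; ring
  have hw_eq : w = z / (I*((y:ℝ):ℂ)) := by rw [hw_def, div_eq_inv_mul]
  have hwre : w.re = z.im / y := by
    rw [hw_eq, Complex.div_re, hiy_re, hiy_im, hiy_nsq]
    field_simp
    ring
  have hwim : w.im = -z.re / y := by
    rw [hw_eq, Complex.div_im, hiy_re, hiy_im, hiy_nsq]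
    field_simp
    ring
  have hnsqw : Complex.normSq w = (‖z‖)^2 / y^2 := by
    rw [Complex.normSq_apply, hwre, hwim, Complex.sq_norm, Complex.normSq_apply]
    field_simp
    ring
  -- assemble
  have hns_lt : Complex.normSq (w - (l:ℂ)) < ε^2 := by
    have he : Complex.normSq (w - (l:ℂ)) = Complex.normSq w - 2*l*w.re + l^2 := by
      simp only [Complex.normSq_apply, Complex.sub_re, Complex.sub_im, Complex.ofReal_re,
        Complex.ofReal_im]
      ring
    have h1 : Complex.normSq w ≤ (l + 2*δ)^2 := by
      rw [hnsqw]
      have h2 : ‖z‖ ≤ (l + 2*δ) * y := by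
        calc ‖z‖ ≤ M + (l + δ) * y := habsz
        _ ≤ δ * y + (l + δ) * y := by linarith
        _ = (l + 2*δ) * y := by ring
      rw [div_le_iff₀ (by positivity : (0:ℝ) < y^2)]
      calc (‖z‖)^2 ≤ ((l + 2*δ)*y)^2 := by
            apply pow_le_pow_left₀ (norm_nonneg _) h2
      _ = (l + 2*δ)^2 * y^2 := by ring
    have h2 : l^2 ≤ l * w.re := by
      rw [hwre, pow_two]
      exact mul_le_mul_of_nonneg_left hl_le hl0
    have h3 : l + 2*δ ≤ l + 2 := by linarith
    have h4 : 4*δ*l + 4*δ^2 ≤ 4*δ*(l+1) := by nlinarith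
    have h5 : 4*δ*(l+1) ≤ ε^2/2 := by
      calc 4*δ*(l+1) ≤ 4*(ε^2/(8*(l+1)))*(l+1) := by
            apply mul_le_mul_of_nonneg_right _ (by linarith)
            apply mul_le_mul_of_nonneg_left hδ2 (by norm_num)
      _ = ε^2/2 := by field_simp; ring
    calc Complex.normSq (w - (l:ℂ)) = Complex.normSq w - 2*(l*w.re) + l^2 := by rw [he]; ring
    _ ≤ (l + 2*δ)^2 - 2*(l^2) + l^2 := by linarith [h1, h2]
    _ = 4*δ*l + 4*δ^2 := by ring
    _ ≤ 4*δ*(l+1) := h4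
    _ ≤ ε^2/2 := h5
    _ < ε^2 := half_lt_self (by positivity)
  rw [Complex.dist_eq, Complex.norm_def, Real.sqrt_lt' hε]
  exact hns_lt

lemma lemB {φ : ℂ → ℂ} (hol : DifferentiableOn ℂ φ {z : ℂ | 0 < z.im})
    (him : ∀ z : ℂ, 0 < z.im → 0 ≤ (φ z).im) :
    ∃ c : ℝ, 0 ≤ c ∧
      Filter.Tendsto (fun y : ℝ => (I*(y:ℂ))⁻¹ * φ (I*y)) Filter.atTop (nhds (c:ℂ)) := by
  have key : ∀ ε : ℝ, 0 < ε → ∃ c : ℝ, 0 ≤ c ∧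
      Filter.Tendsto (fun y : ℝ => (I*(y:ℂ))⁻¹ * (φ (I*y) + (ε:ℂ) * (I*y)))
        Filter.atTop (nhds (c:ℂ)) := by
    intro ε hε
    have hol' : DifferentiableOn ℂ (fun z => φ z + (ε:ℂ) * z) {z : ℂ | 0 < z.im} :=
      hol.add ((differentiable_const _).mul differentiable_id).differentiableOn
    have hpos' : ∀ z : ℂ, 0 < z.im → 0 < ((fun z => φ z + (ε:ℂ) * z) z).im := by
      intro z hz
      simp only [Complex.add_im, Complex.mul_im, Complex.ofReal_re, Complex.ofReal_im]
      have := him z hz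
      nlinarith
    exact lemA hol' hpos'
  -- eventual identity
  have hev : ∀ ε : ℝ, ∀ᶠ y : ℝ in Filter.atTop,
      (I*(y:ℂ))⁻¹ * (φ (I*y) + (ε:ℂ) * (I*y))
        = (I*(y:ℂ))⁻¹ * φ (I*y) + (ε:ℂ) := by
    intro ε
    filter_upwards [Filter.eventually_gt_atTop (0:ℝ)] with y hy
    have hne : (I*(y:ℂ)) ≠ 0 := by
      simp [Complex.ext_iff, ne_of_gt hy]
    rw [mul_add, mul_comm (ε:ℂ), ← mul_assoc, inv_mul_cancel₀ hne, one_mul]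
  obtain ⟨c₁, hc₁0, hc₁⟩ := key 1 one_pos
  have hφt : Filter.Tendsto (fun y : ℝ => (I*(y:ℂ))⁻¹ * φ (I*y)) Filter.atTop
      (nhds ((c₁:ℂ) - 1)) := by
    have h2 := hc₁.sub_const 1
    apply h2.congr'
    filter_upwards [hev 1] with y hy
    push_cast
    push_cast at hy
    rw [hy]; ring
  have hc1 : (1:ℝ) ≤ c₁ := by
    by_contra hcon
    push_neg at hcon
    -- show c₁ - 1 ≥ -ε for all ε, i.e. use key ε
    set ε := (1 - c₁)/2 with hε_def
    have hε : 0 < ε := by rw [hε_def]; linarith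
    obtain ⟨cε, hcε0, hcε⟩ := key ε hε
    have h3 : Filter.Tendsto (fun y : ℝ => (I*(y:ℂ))⁻¹ * (φ (I*y) + (ε:ℂ) * (I*y)))
        Filter.atTop (nhds ((c₁:ℂ) - 1 + ε)) := by
      have h4 := hφt.add_const (ε:ℂ)
      apply h4.congr'
      filter_upwards [hev ε] with y hy
      rw [hy]
    have h5 : (cε:ℂ) = (c₁:ℂ) - 1 + ε := tendsto_nhds_unique hcε h3
    have h6 : cε = c₁ - 1 + ε := by exact_mod_cast h5
    rw [hε_def] at h6
    rw [h6] at hcε0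
    linarith
  refine ⟨c₁ - 1, by linarith, ?_⟩
  have : ((c₁ - 1 : ℝ):ℂ) = (c₁:ℂ) - 1 := by push_cast; ring
  rw [this]
  exact hφt

lemma polar_clm {𝓗 : Type*} [NormedAddCommGroup 𝓗] [InnerProductSpace ℂ 𝓗]
    (T : 𝓗 →L[ℂ] 𝓗) (g h : 𝓗) :
    (inner ℂ g (T h) : ℂ) =
      ((inner ℂ (g+h) (T (g+h)) : ℂ) - (inner ℂ (g-h) (T (g-h)) : ℂ)
        - I * (inner ℂ (g + I•h) (T (g + I•h)) : ℂ)
        + I * (inner ℂ (g - I•h) (T (g - I•h)) : ℂ)) / 4 := by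
  have h1 := inner_map_polarization (T : 𝓗 →ₗ[ℂ] 𝓗) g h
  have h2 := congrArg (starRingEnd ℂ) h1
  simp only [inner_conj_symm, map_div₀, map_add, map_sub, map_mul, Complex.conj_I,
    map_ofNat, ContinuousLinearMap.coe_coe] at h2
  rw [h2]
  simp only [map_add, map_sub]
  ring

theorem stmt6' {𝓗 : Type*} [NormedAddCommGroup 𝓗] [InnerProductSpace ℂ 𝓗]
    [FiniteDimensional ℂ 𝓗]
    (Φ : ℂ → 𝓗 →L[ℂ] 𝓗)
    (hol : DifferentiableOn ℂ Φ {z : ℂ | 0 < z.im})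
    (him : ∀ z : ℂ, 0 < z.im → ∀ h : 𝓗, 0 ≤ (@inner ℂ _ _ h (Φ z h)).im) :
    ∃ B : 𝓗 →L[ℂ] 𝓗,
      (∀ h : 𝓗, Filter.Tendsto
        (fun y : ℝ => (Complex.I * (y : ℂ))⁻¹ • Φ (Complex.I * (y : ℂ)) h)
        Filter.atTop (nhds (B h))) ∧
      (∀ h : 𝓗, 0 ≤ (@inner ℂ _ _ h (B h)).re ∧ (@inner ℂ _ _ h (B h)).im = 0) := by
  classical
  set Q : ℝ → (𝓗 →L[ℂ] 𝓗) := fun y => (Complex.I * (y:ℂ))⁻¹ • Φ (Complex.I * (y:ℂ)) with hQ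
  have hdiag : ∀ x : 𝓗, ∃ c : ℝ, 0 ≤ c ∧
      Filter.Tendsto (fun y : ℝ => (inner ℂ x (Q y x) : ℂ)) Filter.atTop (nhds ((c:ℝ):ℂ)) := by
    intro x
    set L : (𝓗 →L[ℂ] 𝓗) →L[ℂ] ℂ := (innerSL ℂ x).comp (ContinuousLinearMap.apply ℂ 𝓗 x)
      with hL
    have holx : DifferentiableOn ℂ (fun z => (inner ℂ x (Φ z x) : ℂ)) {z : ℂ | 0 < z.im} :=
      L.differentiable.comp_differentiableOn hol
    have himx : ∀ z : ℂ, 0 < z.im → 0 ≤ ((fun z => (inner ℂ x (Φ z x) : ℂ)) z).im :=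
      fun z hz => him z hz x
    obtain ⟨c, hc0, hct⟩ := lemB holx himx
    refine ⟨c, hc0, ?_⟩
    apply hct.congr
    intro y
    rw [hQ]
    simp only [ContinuousLinearMap.smul_apply, inner_smul_right]
  choose b hb0 hbt using hdiag
  set β : 𝓗 → 𝓗 → ℂ := fun g h =>
    (((b (g+h) : ℝ):ℂ) - ((b (g-h) : ℝ):ℂ) - I * ((b (g + I•h) : ℝ):ℂ)
      + I * ((b (g - I•h) : ℝ):ℂ))/4 with hβ
  have hβt : ∀ g h : 𝓗, Filter.Tendsto (fun y => (inner ℂ g (Q y h) : ℂ))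
      Filter.atTop (nhds (β g h)) := by
    intro g h
    have e : ∀ y, (inner ℂ g (Q y h) : ℂ)
        = ((inner ℂ (g+h) (Q y (g+h)) : ℂ) - (inner ℂ (g-h) (Q y (g-h)) : ℂ)
          - I * (inner ℂ (g + I•h) (Q y (g + I•h)) : ℂ)
          + I * (inner ℂ (g - I•h) (Q y (g - I•h)) : ℂ))/4 :=
      fun y => polar_clm (Q y) g h
    rw [show (fun y => (inner ℂ g (Q y h) : ℂ)) = _ from funext e]
    exact ((((hbt (g+h)).sub (hbt (g-h))).sub ((hbt (g+I•h)).const_mul I)).add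
      ((hbt (g-I•h)).const_mul I)).div_const 4
  set ob := stdOrthonormalBasis ℂ 𝓗 with hob
  set B₀ : 𝓗 → 𝓗 := fun h => ∑ i, β (ob i) h • ob i with hB₀
  have hlim : ∀ h : 𝓗, Filter.Tendsto (fun y => Q y h) Filter.atTop (nhds (B₀ h)) := by
    intro h
    have e : ∀ y, Q y h = ∑ i, (inner ℂ (ob i) (Q y h) : ℂ) • ob i :=
      fun y => (ob.sum_repr' (Q y h)).symm
    rw [show (fun y => Q y h) = _ from funext e]
    exact tendsto_finset_sum _ (fun i _ => (hβt (ob i) h).smul_const (ob i))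
  have hadd : ∀ h h' : 𝓗, B₀ (h + h') = B₀ h + B₀ h' := by
    intro h h'
    refine tendsto_nhds_unique ?_ ((hlim h).add (hlim h'))
    exact (hlim (h+h')).congr (fun y => by rw [map_add])
  have hsmul : ∀ (a : ℂ) (h : 𝓗), B₀ (a • h) = a • B₀ h := by
    intro a h
    refine tendsto_nhds_unique ?_ ((hlim h).const_smul a)
    exact (hlim (a • h)).congr (fun y => by rw [map_smul])
  refine ⟨LinearMap.toContinuousLinearMap
    { toFun := B₀, map_add' := hadd, map_smul' := hsmul }, ?_, ?_⟩
  · intro h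
    exact hlim h
  · intro h
    have h1 : Filter.Tendsto (fun y => (inner ℂ h (Q y h) : ℂ)) Filter.atTop
        (nhds (inner ℂ h (B₀ h) : ℂ)) :=
      ((innerSL ℂ h).continuous.tendsto _).comp (hlim h)
    have h2 : (inner ℂ h (B₀ h) : ℂ) = ((b h : ℝ) : ℂ) := tendsto_nhds_unique h1 (hbt h)
    have h3 : (inner ℂ h ((LinearMap.toContinuousLinearMap
        { toFun := B₀, map_add' := hadd, map_smul' := hsmul }) h) : ℂ) = ((b h : ℝ) : ℂ) := h2
    rw [h3]
    simp [hb0 h]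


end

noncomputable section

/-- If `Φ : ℂ₊ → [𝓗]` is holomorphic with `Im Φ(λ) ≥ 0` on the upper half-plane, then the
strong limit `B = s-lim_{y→+∞} (1/(iy)) Φ(iy)` exists and `B ≥ 0`. -/
theorem stmt6 {𝓗 : Type*} [NormedAddCommGroup 𝓗] [InnerProductSpace ℂ 𝓗]
    [FiniteDimensional ℂ 𝓗]
    (Φ : ℂ → 𝓗 →L[ℂ] 𝓗)
    (hol : DifferentiableOn ℂ Φ {z : ℂ | 0 < z.im})
    (him : ∀ z : ℂ, 0 < z.im → ∀ h : 𝓗, 0 ≤ (@inner ℂ _ _ h (Φ z h)).im) :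
    ∃ B : 𝓗 →L[ℂ] 𝓗,
      (∀ h : 𝓗, Filter.Tendsto
        (fun y : ℝ => (Complex.I * (y : ℂ))⁻¹ • Φ (Complex.I * (y : ℂ)) h)
        Filter.atTop (nhds (B h))) ∧
      (∀ h : 𝓗, 0 ≤ (@inner ℂ _ _ h (B h)).re ∧ (@inner ℂ _ _ h (B h)).im = 0) := by
  exact stmt6' Φ hol him
end
end
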